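/- Let A ⊆ ℝⁿ be a closed set and define, for a ∈ A, the generalized tangent space TₐA as the intersection of kernels of differentials at a of C¹ functions vanishing on A near a. Then the function a ↦ dim TₐA is upper semicontinuous on A: every a ∈ A has a neighborhood U in ℝⁿ such that dim TₐA ≥ dim T_{a'}A for all a' ∈ A ∩ U. -/

import Mathlib

/-- The generalized tangent space of a set `A` at `a`, as a submodule: the intersection
of the kernels of the differentials at `a` of all `C¹` functions defined on an open
neighborhood of `a` and vanishing on `A` there. -/
noncomputable def genTangent {E : Type*} [NormedAddCommGroup E] [NormedSpace ℝ E]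
    (A : Set E) (a : E) : Submodule ℝ E :=
  ⨅ p ∈ {q : (E → ℝ) × Set E |
      IsOpen q.2 ∧ a ∈ q.2 ∧ ContDiffOn ℝ 1 q.1 q.2 ∧ ∀ x ∈ A ∩ q.2, q.1 x = 0},
    LinearMap.ker (fderivWithin ℝ p.1 p.2 a : E →ₗ[ℝ] ℝ)

set_option maxHeartbeats 1000000 in
/-- Upper semicontinuity of the dimension of the generalized tangent space: every
`a ∈ A` has a neighborhood `U` in `ℝⁿ` such that `dim T_{a'}A ≤ dim TₐA` for all
`a' ∈ A ∩ U`. -/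
theorem genTangent_dim_upperSemicontinuous
    (n : ℕ) (A : Set (EuclideanSpace ℝ (Fin n))) (hA : IsClosed A) :
    ∀ a ∈ A, ∃ U : Set (EuclideanSpace ℝ (Fin n)), IsOpen U ∧ a ∈ U ∧
      ∀ a' ∈ A ∩ U,
        Module.finrank ℝ (genTangent A a') ≤ Module.finrank ℝ (genTangent A a) := by
  classical
  intro a ha
  let E := EuclideanSpace ℝ (Fin n)
  set 𝒮 : E → Set ((E → ℝ) × Set E) := fun x => {q : (E → ℝ) × Set E |
      IsOpen q.2 ∧ x ∈ q.2 ∧ ContDiffOn ℝ 1 q.1 q.2 ∧ ∀ y ∈ A ∩ q.2, q.1 y = 0} with h𝒮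
  set K : E → ((E → ℝ) × Set E) → Submodule ℝ E :=
    fun x p => LinearMap.ker (fderivWithin ℝ p.1 p.2 x : E →ₗ[ℝ] ℝ) with hK
  have hgen : ∀ x, genTangent A x = ⨅ p ∈ 𝒮 x, K x p := fun x => rfl
  -- the set of dimensions of finite intersections
  set D : Set ℕ := {m | ∃ s : Finset ((E → ℝ) × Set E), (↑s : Set _) ⊆ 𝒮 a ∧
      Module.finrank ℝ ↥(s.inf (K a)) = m} with hD
  have hDne : D.Nonempty := ⟨_, ∅, by simp, rfl⟩
  obtain ⟨s, hs𝒮, hscard⟩ : sInf D ∈ D := Nat.sInf_mem hDne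
  set N := s.inf (K a) with hN
  -- N is minimal, hence equals genTangent A a
  have hmin : ∀ q ∈ 𝒮 a, N ≤ K a q := by
    intro q hq
    by_contra hle
    have hlt : (insert q s).inf (K a) < N := by
      rw [Finset.inf_insert]
      exact lt_of_le_of_ne inf_le_right (fun h => hle (h ▸ inf_le_left))
    have hlt' : Module.finrank ℝ ↥((insert q s).inf (K a)) < sInf D :=
      hscard ▸ Submodule.finrank_lt_finrank_of_lt hlt
    have hmem' : Module.finrank ℝ ↥((insert q s).inf (K a)) ∈ D := by
      refine ⟨insert q s, ?_, rfl⟩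
      simp only [Finset.coe_insert]
      exact Set.insert_subset hq hs𝒮
    exact absurd (Nat.sInf_le hmem') (by omega)
  have hNgen : genTangent A a = N := by
    rw [hgen]
    refine le_antisymm (Finset.le_inf fun p hp => iInf₂_le p (hs𝒮 hp)) (le_iInf₂ hmin)
  -- index type
  set ι := {p // p ∈ s} with hι
  -- basic facts about members of s
  have hmem : ∀ i : ι, IsOpen (i.1.2) ∧ a ∈ i.1.2 ∧ ContDiffOn ℝ 1 i.1.1 i.1.2 ∧
      ∀ y ∈ A ∩ i.1.2, i.1.1 y = 0 := fun i => hs𝒮 i.2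
  have hdiff : ∀ (i : ι) (x : E), x ∈ i.1.2 → DifferentiableAt ℝ i.1.1 x := by
    intro i x hx
    exact ((hmem i).2.2.1.differentiableOn (by norm_num)).differentiableAt
      ((hmem i).1.mem_nhds hx)
  -- the combined map
  set Φ : E → E →L[ℝ] (ι → ℝ) :=
    fun x => ContinuousLinearMap.pi (fun i : ι => fderiv ℝ i.1.1 x) with hΦ
  have hkerΦ : ∀ x : E, LinearMap.ker (Φ x : E →ₗ[ℝ] (ι → ℝ)) = ⨅ i : ι, LinearMap.ker (fderiv ℝ i.1.1 x : E →ₗ[ℝ] ℝ) := by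
    intro x
    ext v
    simp [hΦ, Submodule.mem_iInf, LinearMap.mem_ker, funext_iff]
  -- at points of U₀ with conditions, genTangent ≤ ker Φ
  set U₀ : Set E := ⋂ i : ι, i.1.2 with hU₀
  have hU₀open : IsOpen U₀ := isOpen_iInter_of_finite fun i => (hmem i).1
  have haU₀ : a ∈ U₀ := Set.mem_iInter.2 fun i => (hmem i).2.1
  have hker_ge : ∀ x ∈ U₀, genTangent A x ≤ LinearMap.ker (Φ x : E →ₗ[ℝ] (ι → ℝ)) := by
    intro x hx
    rw [hkerΦ, hgen]
    refine le_iInf fun i => ?_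
    have hxi : x ∈ i.1.2 := Set.mem_iInter.1 hx i
    have : K x i.1 = LinearMap.ker (fderiv ℝ i.1.1 x : E →ₗ[ℝ] ℝ) := by
      simp only [hK]
      rw [fderivWithin_of_isOpen (hmem i).1 hxi]
    exact this ▸ iInf₂_le i.1 ⟨(hmem i).1, hxi, (hmem i).2.2.1, (hmem i).2.2.2⟩
  -- N = ker Φ a
  have hNker : N = LinearMap.ker (Φ a : E →ₗ[ℝ] (ι → ℝ)) := by
    rw [hkerΦ, hN, Finset.inf_eq_iInf, iInf_subtype']
    congr 1
    funext i
    simp only [hK]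
    rw [fderivWithin_of_isOpen (hmem i).1 (hmem i).2.1]
  -- rank argument
  set r := Module.finrank ℝ (LinearMap.range (Φ a : E →ₗ[ℝ] (ι → ℝ))) with hr
  have : ∀ j : Fin r, ∃ v : E, Φ a v = (Module.finBasis ℝ (LinearMap.range (Φ a : E →ₗ[ℝ] (ι → ℝ))) j : ι → ℝ) :=
    fun j => (Module.finBasis ℝ (LinearMap.range (Φ a : E →ₗ[ℝ] (ι → ℝ))) j).2
  choose v hv using this
  set w : E → Fin r → (ι → ℝ) := fun x j => Φ x (v j) with hw
  have hwa : LinearIndependent ℝ (w a) := by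
    have h2 := (Module.finBasis ℝ (LinearMap.range (Φ a : E →ₗ[ℝ] (ι → ℝ)))).linearIndependent.map'
      (LinearMap.range (Φ a : E →ₗ[ℝ] (ι → ℝ))).subtype (Submodule.ker_subtype _)
    have heq : w a = (LinearMap.range (Φ a : E →ₗ[ℝ] (ι → ℝ))).subtype ∘
        (Module.finBasis ℝ (LinearMap.range (Φ a : E →ₗ[ℝ] (ι → ℝ)))) := by
      funext j; exact hv j
    rw [heq]; exact h2
  -- continuity of w on U₀
  have hwcont : ContinuousOn w U₀ := by
    apply continuousOn_pi.2
    intro j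
    apply continuousOn_pi.2
    intro i
    have hc : ContinuousOn (fderiv ℝ i.1.1) i.1.2 :=
      (hmem i).2.2.1.continuousOn_fderiv_of_isOpen (hmem i).1 le_rfl
    have hc' : ContinuousOn (fun x => fderiv ℝ i.1.1 x (v j)) U₀ :=
      (hc.mono (Set.iInter_subset _ i)).clm_apply continuousOn_const
    exact hc'
  -- the neighborhood
  set U := U₀ ∩ w ⁻¹' {f : Fin r → (ι → ℝ) | LinearIndependent ℝ f} with hU
  have hUopen : IsOpen U :=
    hwcont.isOpen_inter_preimage hU₀open isOpen_setOf_linearIndependent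
  refine ⟨U, hUopen, ⟨haU₀, hwa⟩, ?_⟩
  rintro a' ⟨ha'A, ha'U₀, ha'ind⟩
  have hrank : r ≤ Module.finrank ℝ (LinearMap.range (Φ a' : E →ₗ[ℝ] (ι → ℝ))) := by
    have hind : LinearIndependent ℝ (w a') := ha'ind
    have : LinearIndependent ℝ (fun j : Fin r =>
        (⟨Φ a' (v j), LinearMap.mem_range_self _ _⟩ : LinearMap.range (Φ a' : E →ₗ[ℝ] (ι → ℝ)))) := by
      apply hind.of_comp (LinearMap.range (Φ a' : E →ₗ[ℝ] (ι → ℝ))).subtype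
    simpa using this.fintype_card_le_finrank
  have hrn : ∀ x : E, Module.finrank ℝ (LinearMap.range (Φ x : E →ₗ[ℝ] (ι → ℝ))) +
      Module.finrank ℝ (LinearMap.ker (Φ x : E →ₗ[ℝ] (ι → ℝ))) = Module.finrank ℝ E :=
    fun x => LinearMap.finrank_range_add_finrank_ker _
  have h1 := hrn a
  have h2 := hrn a'
  calc Module.finrank ℝ ↥(genTangent A a')
      ≤ Module.finrank ℝ ↥(LinearMap.ker (Φ a' : E →ₗ[ℝ] (ι → ℝ))) :=
        Submodule.finrank_mono (hker_ge a' ha'U₀)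
    _ ≤ Module.finrank ℝ ↥(LinearMap.ker (Φ a : E →ₗ[ℝ] (ι → ℝ))) := by omega
    _ = Module.finrank ℝ ↥N := by rw [hNker]
    _ = Module.finrank ℝ ↥(genTangent A a) := by rw [hNgen]
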